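/- Let N >= 2 and let M be a matching of the complete graph K_N with M elements (a set of pairwise disjoint edges). Let K_N△M denote the graph obtained from K_N by adding, for each edge e = uv in the matching, a new vertex w_e adjacent to exactly u and v. Then the number of D(K_N△M)-draconian sequences equals 3^M · C(2(N-1), N-1). -/
import Mathlib

def DraconianD {V : Type*} [Fintype V] (H : SimpleGraph V) (c : V → ℕ) : Prop :=
  (∑ v, c v) = Fintype.card V - 1 ∧
    ∀ S : Finset V, S.Nonempty →
      (∑ i ∈ S, c i) < ((S : Set V) ∪ ⋃ i ∈ S, H.neighborSet i).ncard

def MatchTri (N M : ℕ) (f g : Fin M → Fin N) : SimpleGraph (Fin N ⊕ Fin M) :=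
  SimpleGraph.fromRel fun a b =>
    (∃ x y : Fin N, a = Sum.inl x ∧ b = Sum.inl y ∧ x ≠ y) ∨
    (∃ i : Fin M, a = Sum.inr i ∧ (b = Sum.inl (f i) ∨ b = Sum.inl (g i)))

namespace Stmt4

variable {N M : ℕ} {f g : Fin M → Fin N}

lemma adj_inl_inl {x y : Fin N} : (MatchTri N M f g).Adj (.inl x) (.inl y) ↔ x ≠ y := by
  simp only [MatchTri, SimpleGraph.fromRel_adj]
  constructor
  · rintro ⟨h, _⟩ hxy; exact h (by simp [hxy])
  · exact fun h => ⟨by simp [h], Or.inl (Or.inl ⟨x, y, rfl, rfl, h⟩)⟩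

lemma adj_inl_inr {x : Fin N} {i : Fin M} :
    (MatchTri N M f g).Adj (.inl x) (.inr i) ↔ x = f i ∨ x = g i := by
  simp [MatchTri, SimpleGraph.fromRel_adj]

lemma adj_inr_inl {x : Fin N} {i : Fin M} :
    (MatchTri N M f g).Adj (.inr i) (.inl x) ↔ x = f i ∨ x = g i := by
  rw [SimpleGraph.adj_comm]; exact adj_inl_inr

lemma adj_inr_inr {i j : Fin M} : ¬ (MatchTri N M f g).Adj (.inr i) (.inr j) := by
  simp [MatchTri, SimpleGraph.fromRel_adj]

section
variable (hmatch : Function.Injective (Sum.elim f g : Fin M ⊕ Fin M → Fin N))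
include hmatch

lemma hf_inj : Function.Injective f := fun i j h => by
  have := hmatch (a₁ := .inl i) (a₂ := .inl j) (by simpa using h); simpa using this

lemma hg_inj : Function.Injective g := fun i j h => by
  have := hmatch (a₁ := .inr i) (a₂ := .inr j) (by simpa using h); simpa using this

lemma hfg_ne (i j : Fin M) : f i ≠ g j := fun h => by
  have := hmatch (a₁ := .inl i) (a₂ := .inr j) (by simpa using h); simp at this

end

lemma mem_USet {S : Finset (Fin N ⊕ Fin M)} {x} :
    x ∈ ((S : Set (Fin N ⊕ Fin M)) ∪ ⋃ i ∈ S, (MatchTri N M f g).neighborSet i) ↔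
      x ∈ S ∨ ∃ s ∈ S, (MatchTri N M f g).Adj s x := by
  simp [SimpleGraph.mem_neighborSet]

lemma char (hN : 2 ≤ N)
    (hmatch : Function.Injective (Sum.elim f g : Fin M ⊕ Fin M → Fin N))
    (c : Fin N ⊕ Fin M → ℕ) :
    DraconianD (MatchTri N M f g) c ↔
      (∑ v, c v) = N + M - 1 ∧ (∀ i, c (Sum.inr i) ≤ 2) ∧
        ∀ i, 1 ≤ c (Sum.inl (f i)) + c (Sum.inl (g i)) + c (Sum.inr i) := by
  have hcard : Fintype.card (Fin N ⊕ Fin M) = N + M := by simp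
  constructor
  · intro h
    have hsum : (∑ v, c v) = N + M - 1 := by rw [h.1, hcard]
    refine ⟨hsum, ?_, ?_⟩
    · intro i
      have hlt := h.2 {Sum.inr i} (Finset.singleton_nonempty _)
      have hU : ((↑({Sum.inr i} : Finset (Fin N ⊕ Fin M)) : Set (Fin N ⊕ Fin M)) ∪
          ⋃ s ∈ ({Sum.inr i} : Finset (Fin N ⊕ Fin M)), (MatchTri N M f g).neighborSet s) =
          ↑({Sum.inr i, Sum.inl (f i), Sum.inl (g i)} : Finset (Fin N ⊕ Fin M)) := by
        ext x
        rw [mem_USet]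
        cases x with
        | inl u => simp [adj_inr_inl, eq_comm]
        | inr j => simp [adj_inr_inr, eq_comm]
      rw [hU, Set.ncard_coe_finset] at hlt
      have h3 : ({Sum.inr i, Sum.inl (f i), Sum.inl (g i)} : Finset (Fin N ⊕ Fin M)).card = 3 := by
        rw [Finset.card_insert_of_notMem (by simp), Finset.card_insert_of_notMem (by
          simp [hfg_ne hmatch i i]), Finset.card_singleton]
      rw [h3] at hlt
      simpa using Nat.lt_succ_iff.mp (by simpa using hlt)
    · intro i
      by_contra h0
      push_neg at h0
      have hx : c (Sum.inl (f i)) = 0 := by omega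
      have hy : c (Sum.inl (g i)) = 0 := by omega
      have ha2 : c (Sum.inr i) = 0 := by omega
      set t : Finset (Fin N ⊕ Fin M) := {Sum.inl (f i), Sum.inl (g i), Sum.inr i} with ht
      have hsum0 : ∀ v ∈ t, c v = 0 := by
        intro v hv
        simp only [ht, Finset.mem_insert, Finset.mem_singleton] at hv
        rcases hv with rfl | rfl | rfl <;> assumption
      rcases (Finset.univ \ t).eq_empty_or_nonempty with hS | hS
      · have hsub : (Finset.univ : Finset (Fin N ⊕ Fin M)) ⊆ t :=
          (Finset.sdiff_eq_empty_iff_subset).mp hS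
        have : (∑ v, c v) = 0 :=
          Finset.sum_eq_zero (fun v _ => hsum0 v (hsub (Finset.mem_univ v)))
        omega
      · have hlt := h.2 _ hS
        have hsub : ((↑(Finset.univ \ t) : Set (Fin N ⊕ Fin M)) ∪
            ⋃ s ∈ Finset.univ \ t, (MatchTri N M f g).neighborSet s) ⊆
            (↑(Finset.univ.erase (Sum.inr i : Fin N ⊕ Fin M)) : Set (Fin N ⊕ Fin M)) := by
          intro x hx
          rw [mem_USet] at hx
          simp only [Finset.coe_erase, Set.mem_diff, Finset.coe_univ, Set.mem_univ, true_and,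
            Set.mem_singleton_iff]
          rcases hx with hx | ⟨s, hs, hadj⟩
          · intro hxi
            rw [Finset.mem_sdiff] at hx
            exact hx.2 (by simp [ht, hxi])
          · intro hxi
            subst hxi
            rw [Finset.mem_sdiff] at hs
            cases s with
            | inl u =>
              rcases adj_inl_inr.mp hadj with rfl | rfl <;> exact hs.2 (by simp [ht])
            | inr j => exact adj_inr_inr hadj
        have hle : ((↑(Finset.univ \ t) : Set (Fin N ⊕ Fin M)) ∪
            ⋃ s ∈ Finset.univ \ t, (MatchTri N M f g).neighborSet s).ncard ≤ N + M - 1 := by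
          calc _ ≤ (↑(Finset.univ.erase (Sum.inr i : Fin N ⊕ Fin M)) : Set (Fin N ⊕ Fin M)).ncard :=
                Set.ncard_le_ncard hsub (Finset.finite_toSet _)
            _ = (Finset.univ.erase (Sum.inr i)).card := Set.ncard_coe_finset _
            _ = N + M - 1 := by
                rw [Finset.card_erase_of_mem (Finset.mem_univ _), Finset.card_univ, hcard]
        have ht0 : ∑ v ∈ t, c v = 0 := Finset.sum_eq_zero hsum0
        have hSsum : ∑ v ∈ Finset.univ \ t, c v + ∑ v ∈ t, c v = ∑ v, c v :=
          Finset.sum_sdiff (Finset.subset_univ t)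
        omega
  · rintro ⟨hsum, ha, htrip⟩
    constructor
    · rw [hcard]; exact hsum
    intro S hSne
    set A : Finset (Fin N) := S.preimage Sum.inl Sum.inl_injective.injOn with hA
    set B : Finset (Fin M) := S.preimage Sum.inr Sum.inr_injective.injOn with hB
    have hAmem : ∀ v, v ∈ A ↔ Sum.inl v ∈ S := fun v => Finset.mem_preimage
    have hBmem : ∀ i, i ∈ B ↔ Sum.inr i ∈ S := fun i => Finset.mem_preimage
    have hS_eq : S = A.image Sum.inl ∪ B.image Sum.inr := by
      ext x; cases x <;> simp [hAmem, hBmem]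
    have hsum_split : ∑ x ∈ S, c x = ∑ v ∈ A, c (.inl v) + ∑ i ∈ B, c (.inr i) := by
      rw [hS_eq, Finset.sum_union (by
        simp [Finset.disjoint_left]), Finset.sum_image (fun _ _ _ _ h => Sum.inl_injective h),
        Finset.sum_image (fun _ _ _ _ h => Sum.inr_injective h)]
    rcases A.eq_empty_or_nonempty with hAe | ⟨v0, hv0⟩
    · -- S consists only of inr vertices
      have hSB : S = B.image Sum.inr := by rw [hS_eq, hAe]; simp
      have hBne : B.Nonempty := by
        rcases hSne with ⟨x, hx⟩
        rw [hSB] at hx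
        rcases Finset.mem_image.mp hx with ⟨i, hi, _⟩
        exact ⟨i, hi⟩
      have hU : ((S : Set (Fin N ⊕ Fin M)) ∪ ⋃ s ∈ S, (MatchTri N M f g).neighborSet s) =
          ↑((B.image fun i => (Sum.inl (f i) : Fin N ⊕ Fin M)) ∪
            (B.image fun i => (Sum.inl (g i) : Fin N ⊕ Fin M)) ∪ B.image Sum.inr) := by
        ext x
        rw [mem_USet, hSB]
        cases x with
        | inl u =>
          simp only [Finset.coe_union, Set.mem_union, Finset.mem_coe, Finset.mem_image]
          constructor
          · rintro (⟨i, hi, h⟩ | ⟨s, hs, hadj⟩)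
            · exact absurd h (by simp)
            · rcases hs with ⟨i, hi, rfl⟩
              rcases adj_inr_inl.mp hadj with rfl | rfl
              · exact Or.inl (Or.inl ⟨i, hi, rfl⟩)
              · exact Or.inl (Or.inr ⟨i, hi, rfl⟩)
          · rintro ((⟨i, hi, h⟩ | ⟨i, hi, h⟩) | ⟨i, hi, h⟩)
            · exact Or.inr ⟨Sum.inr i, ⟨i, hi, rfl⟩,
                (by rw [← h]; exact adj_inr_inl.mpr (Or.inl rfl))⟩
            · exact Or.inr ⟨Sum.inr i, ⟨i, hi, rfl⟩,
                (by rw [← h]; exact adj_inr_inl.mpr (Or.inr rfl))⟩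
            · exact absurd h (by simp)
        | inr j =>
          simp only [Finset.coe_union, Set.mem_union, Finset.mem_coe, Finset.mem_image]
          constructor
          · rintro (⟨i, hi, h⟩ | ⟨s, hs, hadj⟩)
            · rcases Sum.inr_injective h with rfl; exact Or.inr ⟨i, hi, rfl⟩
            · rcases hs with ⟨i, _, rfl⟩
              exact absurd hadj adj_inr_inr
          · rintro ((⟨i, hi, h⟩ | ⟨i, hi, h⟩) | ⟨i, hi, h⟩)
            · exact absurd h (by simp)
            · exact absurd h (by simp)
            · exact Or.inl ⟨i, hi, h⟩
      rw [hU, Set.ncard_coe_finset]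
      have hc1 : ((B.image fun i => (Sum.inl (f i) : Fin N ⊕ Fin M)) ∪
            (B.image fun i => (Sum.inl (g i) : Fin N ⊕ Fin M)) ∪ B.image Sum.inr).card =
          B.card + B.card + B.card := by
        rw [Finset.card_union_of_disjoint (by
          simp only [Finset.disjoint_left, Finset.mem_union, Finset.mem_image]
          rintro x (⟨i, _, rfl⟩ | ⟨i, _, rfl⟩) ⟨j, _, h⟩ <;> exact absurd h (by simp)),
          Finset.card_union_of_disjoint (by
          simp only [Finset.disjoint_left, Finset.mem_image]
          rintro x ⟨i, _, rfl⟩ ⟨j, _, h⟩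
          exact hfg_ne hmatch i j (Sum.inl_injective h.symm)),
          Finset.card_image_of_injective _ (fun a b h => hf_inj hmatch (Sum.inl_injective h)),
          Finset.card_image_of_injective _ (fun a b h => hg_inj hmatch (Sum.inl_injective h)),
          Finset.card_image_of_injective _ Sum.inr_injective]
      rw [hc1, hsum_split, hAe]
      have hb : ∑ i ∈ B, c (.inr i) ≤ 2 * B.card := by
        calc ∑ i ∈ B, c (.inr i) ≤ ∑ _i ∈ B, 2 := Finset.sum_le_sum (fun i _ => ha i)
          _ = 2 * B.card := by rw [Finset.sum_const]; ring
      have hBpos : 1 ≤ B.card := hBne.card_pos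
      simp only [Finset.sum_empty, zero_add]
      omega
    · -- S contains an inl vertex v0
      set T : Finset (Fin M) :=
        Finset.univ.filter (fun i => Sum.inr i ∈ S ∨ f i ∈ A ∨ g i ∈ A) with hT
      have hTmem : ∀ i, i ∈ T ↔ (Sum.inr i ∈ S ∨ f i ∈ A ∨ g i ∈ A) := by
        intro i; rw [hT, Finset.mem_filter]; simp
      have hBT : B ⊆ T := fun i hi => (hTmem i).mpr (Or.inl ((hBmem i).mp hi))
      have hU : ((S : Set (Fin N ⊕ Fin M)) ∪ ⋃ s ∈ S, (MatchTri N M f g).neighborSet s) =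
          ↑((Finset.univ.image (Sum.inl : Fin N → Fin N ⊕ Fin M)) ∪ T.image Sum.inr) := by
        ext x
        rw [mem_USet]
        cases x with
        | inl u =>
          simp only [Finset.coe_union, Set.mem_union, Finset.mem_coe, Finset.mem_union,
            Finset.mem_image, Finset.mem_univ]
          constructor
          · intro _; exact Or.inl ⟨u, trivial, rfl⟩
          · intro _
            rcases eq_or_ne u v0 with rfl | hne
            · exact Or.inl ((hAmem u).mp hv0)
            · exact Or.inr ⟨Sum.inl v0, (hAmem v0).mp hv0, adj_inl_inl.mpr (Ne.symm hne)⟩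
        | inr j =>
          simp only [Finset.coe_union, Set.mem_union, Finset.mem_coe, Finset.mem_union,
            Finset.mem_image, Finset.mem_univ]
          constructor
          · rintro (hj | ⟨s, hs, hadj⟩)
            · exact Or.inr ⟨j, (hTmem j).mpr (Or.inl hj), rfl⟩
            · cases s with
              | inl u =>
                rcases adj_inl_inr.mp hadj with rfl | rfl
                · exact Or.inr ⟨j, (hTmem j).mpr (Or.inr (Or.inl ((hAmem _).mpr hs))), rfl⟩
                · exact Or.inr ⟨j, (hTmem j).mpr (Or.inr (Or.inr ((hAmem _).mpr hs))), rfl⟩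
              | inr k => exact absurd hadj adj_inr_inr
          · rintro (⟨u, _, h⟩ | ⟨i, hi, h⟩)
            · exact absurd h (by simp)
            · rcases Sum.inr_injective h with rfl
              rcases (hTmem i).mp hi with hj | hj | hj
              · exact Or.inl hj
              · exact Or.inr ⟨Sum.inl (f i), (hAmem _).mp hj, adj_inl_inr.mpr (Or.inl rfl)⟩
              · exact Or.inr ⟨Sum.inl (g i), (hAmem _).mp hj, adj_inl_inr.mpr (Or.inr rfl)⟩
      rw [hU, Set.ncard_coe_finset]
      have hcardU : ((Finset.univ.image (Sum.inl : Fin N → Fin N ⊕ Fin M)) ∪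
          T.image Sum.inr).card = N + T.card := by
        rw [Finset.card_union_of_disjoint (by
          simp only [Finset.disjoint_left, Finset.mem_image]
          rintro x ⟨u, _, rfl⟩ ⟨i, _, h⟩; exact absurd h (by simp)),
          Finset.card_image_of_injective _ Sum.inl_injective,
          Finset.card_image_of_injective _ Sum.inr_injective, Finset.card_univ, Fintype.card_fin]
      -- key inequalities
      have hkey1 : ∑ v ∈ A, c (.inl v) + ∑ i ∈ Tᶜ, (c (.inl (f i)) + c (.inl (g i))) ≤
          ∑ v : Fin N, c (.inl v) := by
        have h1 : ∑ i ∈ Tᶜ, (c (.inl (f i)) + c (.inl (g i))) =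
            ∑ v ∈ (Tᶜ.image f ∪ Tᶜ.image g), c (.inl v) := by
          rw [Finset.sum_union (by
            simp only [Finset.disjoint_left, Finset.mem_image]
            rintro x ⟨i, _, rfl⟩ ⟨j, _, h⟩; exact hfg_ne hmatch i j h.symm),
            Finset.sum_image (fun a _ b _ h => hf_inj hmatch h),
            Finset.sum_image (fun a _ b _ h => hg_inj hmatch h), ← Finset.sum_add_distrib]
        have h2 : Disjoint A (Tᶜ.image f ∪ Tᶜ.image g) := by
          simp only [Finset.disjoint_left, Finset.mem_union, Finset.mem_image]
          rintro v hv (⟨i, hi, rfl⟩ | ⟨i, hi, rfl⟩) <;>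
            exact (Finset.mem_compl.mp hi) ((hTmem i).mpr (by tauto))
        rw [h1, ← Finset.sum_union h2]
        exact Finset.sum_le_sum_of_subset (Finset.subset_univ _)
      have hkey2 : ∑ i ∈ B, c (.inr i) + ∑ i ∈ Tᶜ, c (.inr i) ≤ ∑ i : Fin M, c (.inr i) := by
        rw [← Finset.sum_union (disjoint_compl_right.mono_left hBT)]
        exact Finset.sum_le_sum_of_subset (Finset.subset_univ _)
      have hkey3 : M - T.card ≤
          ∑ i ∈ Tᶜ, (c (.inl (f i)) + c (.inl (g i)) + c (.inr i)) := by
        have h1 : Tᶜ.card • 1 ≤ ∑ i ∈ Tᶜ, (c (.inl (f i)) + c (.inl (g i)) + c (.inr i)) :=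
          Finset.card_nsmul_le_sum _ _ _ (fun i _ => htrip i)
        have h2 : Tᶜ.card = M - T.card := by
          rw [Finset.card_compl, Fintype.card_fin]
        simp only [smul_eq_mul, mul_one] at h1
        omega
      have htot : ∑ v : Fin N, c (.inl v) + ∑ i : Fin M, c (.inr i) = N + M - 1 := by
        rw [← Fintype.sum_sum_type]; exact hsum
      have hTle : T.card ≤ M := le_trans (Finset.card_le_univ T) (by simp)
      have hsplit3 : ∑ i ∈ Tᶜ, (c (.inl (f i)) + c (.inl (g i)) + c (.inr i)) =
          ∑ i ∈ Tᶜ, (c (.inl (f i)) + c (.inl (g i))) + ∑ i ∈ Tᶜ, c (.inr i) := by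
        rw [← Finset.sum_add_distrib]
      rw [hsum_split, hcardU]
      omega

/-- The per-edge bijection: input `(x, y, a) = (c (f i), c (g i), c (w_i))`. -/
def phi (p : ℕ × ℕ × ℕ) : Fin 3 × ℕ × ℕ :=
  if p.2.2 = 1 then (1, p.1, p.2.1)
  else if p.2.2 = 2 then (2, p.1 + 1, p.2.1)
  else if p.1 = 0 then (2, 0, p.2.1 - 1)
  else (0, p.1 - 1, p.2.1)

def psi (q : Fin 3 × ℕ × ℕ) : ℕ × ℕ × ℕ :=
  if q.1 = 1 then (q.2.1, q.2.2, 1)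
  else if q.1 = 0 then (q.2.1 + 1, q.2.2, 0)
  else if q.2.1 = 0 then (0, q.2.2 + 1, 0)
  else (q.2.1 - 1, q.2.2, 2)

lemma psi_phi (p : ℕ × ℕ × ℕ) (h2 : p.2.2 ≤ 2) (h1 : 1 ≤ p.1 + p.2.1 + p.2.2) :
    psi (phi p) = p := by
  obtain ⟨x, y, a⟩ := p
  simp only at h2 h1
  interval_cases a <;> by_cases hx : x = 0 <;>
    simp only [phi, psi, hx] <;> norm_num <;> (try split_ifs) <;> (try simp_all) <;> omega

lemma phi_psi (q : Fin 3 × ℕ × ℕ) : phi (psi q) = q := by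
  obtain ⟨e, x, y⟩ := q
  fin_cases e <;> by_cases hx : x = 0 <;>
    simp only [phi, psi, hx] <;> norm_num <;> (try split_ifs) <;> (try simp_all) <;> omega

lemma phi_sum (p : ℕ × ℕ × ℕ) (h2 : p.2.2 ≤ 2) (h1 : 1 ≤ p.1 + p.2.1 + p.2.2) :
    (phi p).2.1 + (phi p).2.2 + 1 = p.1 + p.2.1 + p.2.2 := by
  obtain ⟨x, y, a⟩ := p
  simp only at h2 h1
  interval_cases a <;> by_cases hx : x = 0 <;>
    simp only [phi, psi, hx] <;> norm_num <;> (try split_ifs) <;> (try simp_all) <;> omega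

lemma psi_cond (q : Fin 3 × ℕ × ℕ) :
    (psi q).2.2 ≤ 2 ∧ 1 ≤ (psi q).1 + (psi q).2.1 + (psi q).2.2 ∧
      (psi q).1 + (psi q).2.1 + (psi q).2.2 = q.2.1 + q.2.2 + 1 := by
  obtain ⟨e, x, y⟩ := q
  fin_cases e <;> by_cases hx : x = 0 <;>
    simp only [phi, psi, hx] <;> norm_num <;> (try split_ifs) <;> (try simp_all) <;> omega

abbrev matched (f : Fin M → Fin N) (g : Fin M → Fin N) (v : Fin N) : Prop :=
  v ∈ Finset.univ.image f ∪ Finset.univ.image g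

section
variable (hmatch : Function.Injective (Sum.elim f g : Fin M ⊕ Fin M → Fin N))

/-- The partition of `Fin N` into `f`-endpoints, `g`-endpoints, and unmatched vertices. -/
noncomputable def eP : (Fin M ⊕ Fin M) ⊕ {v : Fin N // ¬ matched f g v} ≃ Fin N :=
  (Equiv.sumCongr ((Equiv.ofInjective _ hmatch).trans (Equiv.subtypeEquivRight (by
    intro v
    simp [matched, Sum.exists, eq_comm]))) (Equiv.refl _)).trans
  (Equiv.sumCompl (matched f g))

lemma eP_inl_inl (i : Fin M) : eP hmatch (.inl (.inl i)) = f i := rfl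

lemma eP_inl_inr (i : Fin M) : eP hmatch (.inl (.inr i)) = g i := rfl

lemma eP_inr (w : {v : Fin N // ¬ matched f g v}) : eP hmatch (.inr w) = w.val := rfl

lemma eP_symm_f (i : Fin M) : (eP hmatch).symm (f i) = .inl (.inl i) :=
  (eP hmatch).symm_apply_eq.mpr rfl

lemma eP_symm_g (i : Fin M) : (eP hmatch).symm (g i) = .inl (.inr i) :=
  (eP hmatch).symm_apply_eq.mpr rfl

lemma eP_symm_c (w : {v : Fin N // ¬ matched f g v}) : (eP hmatch).symm w.val = .inr w :=
  (eP hmatch).symm_apply_eq.mpr rfl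

lemma sum_split (hmatch : Function.Injective (Sum.elim f g : Fin M ⊕ Fin M → Fin N))
    (h : Fin N → ℕ) :
    ∑ v, h v = (∑ i, h (f i) + ∑ i, h (g i)) + ∑ w : {v : Fin N // ¬ matched f g v}, h w.val := by
  rw [← Equiv.sum_comp (eP hmatch) h, Fintype.sum_sum_type, Fintype.sum_sum_type]
  rfl

/-- Reassemble a function on `Fin N` from data on the partition. -/
noncomputable def unsplit (q : (Fin M → ℕ × ℕ × ℕ) × ({v : Fin N // ¬ matched f g v} → ℕ)) :
    Fin N → ℕ := fun v =>
  Sum.elim (Sum.elim (fun i => (q.1 i).1) (fun i => (q.1 i).2.1)) (fun w => q.2 w)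
    ((eP hmatch).symm v)

lemma unsplit_f (q) (i : Fin M) : unsplit hmatch q (f i) = (q.1 i).1 := by
  rw [unsplit, eP_symm_f]; rfl

lemma unsplit_g (q) (i : Fin M) : unsplit hmatch q (g i) = (q.1 i).2.1 := by
  rw [unsplit, eP_symm_g]; rfl

lemma unsplit_c (q) (w : {v : Fin N // ¬ matched f g v}) : unsplit hmatch q w.val = q.2 w := by
  rw [unsplit, eP_symm_c]; rfl

noncomputable def equiv1 :
    {c : Fin N ⊕ Fin M → ℕ //
      (∑ v, c v) = N + M - 1 ∧ (∀ i, c (Sum.inr i) ≤ 2) ∧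
        ∀ i, 1 ≤ c (Sum.inl (f i)) + c (Sum.inl (g i)) + c (Sum.inr i)} ≃
    {q : (Fin M → ℕ × ℕ × ℕ) × ({v : Fin N // ¬ matched f g v} → ℕ) //
      (∑ i, ((q.1 i).1 + (q.1 i).2.1 + (q.1 i).2.2)) + ∑ w, q.2 w = N + M - 1 ∧
        ∀ i, (q.1 i).2.2 ≤ 2 ∧ 1 ≤ (q.1 i).1 + (q.1 i).2.1 + (q.1 i).2.2} where
  toFun c := ⟨⟨fun i => (c.1 (.inl (f i)), c.1 (.inl (g i)), c.1 (.inr i)),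
      fun w => c.1 (.inl w.val)⟩, by
    obtain ⟨c, h1, h2, h3⟩ := c
    refine ⟨?_, fun i => ⟨h2 i, h3 i⟩⟩
    have hs := sum_split hmatch (fun v => c (.inl v))
    have htt : ∑ v : Fin N ⊕ Fin M, c v =
        ∑ v : Fin N, c (.inl v) + ∑ i : Fin M, c (.inr i) := Fintype.sum_sum_type _
    have hd : ∑ i : Fin M, (c (.inl (f i)) + c (.inl (g i)) + c (.inr i)) =
        (∑ i : Fin M, c (.inl (f i)) + ∑ i : Fin M, c (.inl (g i))) +
          ∑ i : Fin M, c (.inr i) := by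
      rw [← Finset.sum_add_distrib, ← Finset.sum_add_distrib]
    simp only at hs ⊢
    omega⟩
  invFun q := ⟨Sum.elim (unsplit hmatch q.1) (fun i => (q.1.1 i).2.2), by
    obtain ⟨⟨t, u⟩, h1, h2⟩ := q
    have htt : ∑ v : Fin N ⊕ Fin M, Sum.elim (unsplit hmatch (t, u)) (fun i => (t i).2.2) v =
        ∑ v : Fin N, unsplit hmatch (t, u) v + ∑ i : Fin M, (t i).2.2 :=
      Fintype.sum_sum_type _
    have hs := sum_split hmatch (unsplit hmatch (t, u))
    have hf' : ∀ i, unsplit hmatch (t, u) (f i) = (t i).1 := unsplit_f hmatch _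
    have hg' : ∀ i, unsplit hmatch (t, u) (g i) = (t i).2.1 := unsplit_g hmatch _
    have hc' : ∀ w, unsplit hmatch (t, u) w.val = u w := unsplit_c hmatch _
    simp only [hf', hg', hc'] at hs
    refine ⟨?_, fun i => (h2 i).1, fun i => ?_⟩
    · show ∑ v : Fin N ⊕ Fin M,
          Sum.elim (unsplit hmatch (t, u)) (fun i => (t i).2.2) v = N + M - 1
      have hd : ∑ i : Fin M, ((t i).1 + (t i).2.1 + (t i).2.2) =
          (∑ i : Fin M, (t i).1 + ∑ i : Fin M, (t i).2.1) + ∑ i : Fin M, (t i).2.2 := by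
        rw [← Finset.sum_add_distrib, ← Finset.sum_add_distrib]
      simp only at h1
      omega
    · show 1 ≤ unsplit hmatch (t, u) (f i) + unsplit hmatch (t, u) (g i) + (t i).2.2
      rw [hf', hg']
      exact (h2 i).2⟩
  left_inv := by
    rintro ⟨c, hc⟩
    apply Subtype.ext
    funext x
    cases x with
    | inr i => rfl
    | inl v =>
      show unsplit hmatch _ v = c (.inl v)
      rcases hv : (eP hmatch).symm v with (i | i) | w
      · have : v = f i := by
          rw [← eP_inl_inl hmatch i, ← hv, Equiv.apply_symm_apply]
        rw [this, unsplit_f]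
      · have : v = g i := by
          rw [← eP_inl_inr hmatch i, ← hv, Equiv.apply_symm_apply]
        rw [this, unsplit_g]
      · have : v = w.val := by
          rw [← eP_inr hmatch w, ← hv, Equiv.apply_symm_apply]
        rw [this, unsplit_c]
  right_inv := by
    rintro ⟨⟨t, u⟩, hq⟩
    apply Subtype.ext
    refine Prod.ext (funext fun i => ?_) (funext fun w => ?_)
    · show (_, _, _) = t i
      simp only [Sum.elim_inl, Sum.elim_inr, unsplit_f, unsplit_g]
    · show unsplit hmatch (t, u) w.val = u w
      rw [unsplit_c]

noncomputable def equiv2 (hN : 1 ≤ N) :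
    {q : (Fin M → ℕ × ℕ × ℕ) × ({v : Fin N // ¬ matched f g v} → ℕ) //
      (∑ i, ((q.1 i).1 + (q.1 i).2.1 + (q.1 i).2.2)) + ∑ w, q.2 w = N + M - 1 ∧
        ∀ i, (q.1 i).2.2 ≤ 2 ∧ 1 ≤ (q.1 i).1 + (q.1 i).2.1 + (q.1 i).2.2} ≃
    (Fin M → Fin 3) × {q : (Fin M → ℕ × ℕ) × ({v : Fin N // ¬ matched f g v} → ℕ) //
      (∑ i, ((q.1 i).1 + (q.1 i).2)) + ∑ w, q.2 w = N - 1} where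
  toFun q := ⟨fun i => (phi (q.1.1 i)).1,
    ⟨⟨fun i => ((phi (q.1.1 i)).2.1, (phi (q.1.1 i)).2.2), q.1.2⟩, by
      obtain ⟨⟨t, u⟩, h1, h2⟩ := q
      have hsum : ∑ i : Fin M, ((phi (t i)).2.1 + (phi (t i)).2.2 + 1) =
          ∑ i : Fin M, ((t i).1 + (t i).2.1 + (t i).2.2) :=
        Finset.sum_congr rfl (fun i _ => phi_sum _ (h2 i).1 (h2 i).2)
      have hM : ∑ i : Fin M, ((phi (t i)).2.1 + (phi (t i)).2.2 + 1) =
          ∑ i : Fin M, ((phi (t i)).2.1 + (phi (t i)).2.2) + M := by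
        rw [Finset.sum_add_distrib, Finset.sum_const, Finset.card_univ, Fintype.card_fin,
          smul_eq_mul, mul_one]
      simp only at h1 ⊢
      omega⟩⟩
  invFun q := ⟨⟨fun i => psi (q.1 i, q.2.1.1 i), q.2.1.2⟩, by
      obtain ⟨ε, ⟨r, u⟩, h1⟩ := q
      have hc : ∀ i : Fin M, (psi (ε i, r i)).2.2 ≤ 2 ∧
          1 ≤ (psi (ε i, r i)).1 + (psi (ε i, r i)).2.1 + (psi (ε i, r i)).2.2 ∧
          (psi (ε i, r i)).1 + (psi (ε i, r i)).2.1 + (psi (ε i, r i)).2.2 =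
            (r i).1 + (r i).2 + 1 := fun i => psi_cond (ε i, r i)
      refine ⟨?_, fun i => ⟨(hc i).1, (hc i).2.1⟩⟩
      have hsum : ∑ i : Fin M,
          ((psi (ε i, r i)).1 + (psi (ε i, r i)).2.1 + (psi (ε i, r i)).2.2) =
          ∑ i : Fin M, ((r i).1 + (r i).2 + 1) :=
        Finset.sum_congr rfl (fun i _ => (hc i).2.2)
      have hM : ∑ i : Fin M, ((r i).1 + (r i).2 + 1) =
          ∑ i : Fin M, ((r i).1 + (r i).2) + M := by
        rw [Finset.sum_add_distrib, Finset.sum_const, Finset.card_univ, Fintype.card_fin,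
          smul_eq_mul, mul_one]
      simp only at h1 ⊢
      omega⟩
  left_inv := by
    rintro ⟨⟨t, u⟩, h1, h2⟩
    apply Subtype.ext
    refine Prod.ext (funext fun i => ?_) rfl
    show psi ((phi (t i)).1, ((phi (t i)).2.1, (phi (t i)).2.2)) = t i
    exact psi_phi _ (h2 i).1 (h2 i).2
  right_inv := by
    rintro ⟨ε, ⟨r, u⟩, h1⟩
    refine Prod.ext (funext fun i => ?_) (Subtype.ext (Prod.ext (funext fun i => ?_) rfl))
    · show (phi (psi (ε i, r i))).1 = ε i
      rw [phi_psi]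
    · show ((phi (psi (ε i, r i))).2.1, (phi (psi (ε i, r i))).2.2) = r i
      rw [phi_psi]

noncomputable def equiv3 (hmatch : Function.Injective (Sum.elim f g : Fin M ⊕ Fin M → Fin N)) :
    {b : Fin N → ℕ // ∑ v, b v = N - 1} ≃
    {q : (Fin M → ℕ × ℕ) × ({v : Fin N // ¬ matched f g v} → ℕ) //
      (∑ i, ((q.1 i).1 + (q.1 i).2)) + ∑ w, q.2 w = N - 1} where
  toFun b := ⟨⟨fun i => (b.1 (f i), b.1 (g i)), fun w => b.1 w.val⟩, by
    obtain ⟨b, hb⟩ := b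
    have hs := sum_split hmatch b
    have hd : ∑ i : Fin M, (b (f i) + b (g i)) =
        ∑ i : Fin M, b (f i) + ∑ i : Fin M, b (g i) := Finset.sum_add_distrib
    show (∑ i : Fin M, (b (f i) + b (g i))) +
      ∑ w : {v : Fin N // ¬ matched f g v}, b w.val = N - 1
    omega⟩
  invFun q := ⟨unsplit hmatch ⟨fun i => ((q.1.1 i).1, (q.1.1 i).2, 0), q.1.2⟩, by
    obtain ⟨⟨r, u⟩, h1⟩ := q
    show ∑ v, unsplit hmatch (fun i => ((r i).1, (r i).2, 0), u) v = N - 1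
    have hs := sum_split hmatch (unsplit hmatch (fun i => ((r i).1, (r i).2, 0), u))
    have hf' := unsplit_f hmatch (fun i => ((r i).1, (r i).2, 0), u)
    have hg' := unsplit_g hmatch (fun i => ((r i).1, (r i).2, 0), u)
    have hc' := unsplit_c hmatch (fun i => ((r i).1, (r i).2, 0), u)
    simp only [hf', hg', hc'] at hs
    have hd : ∑ i : Fin M, ((r i).1 + (r i).2) =
        ∑ i : Fin M, (r i).1 + ∑ i : Fin M, (r i).2 := Finset.sum_add_distrib
    simp only at h1
    omega⟩
  left_inv := by
    rintro ⟨b, hb⟩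
    apply Subtype.ext
    funext v
    show unsplit hmatch _ v = b v
    rcases hv : (eP hmatch).symm v with (i | i) | w
    · have : v = f i := by
        rw [← eP_inl_inl hmatch i, ← hv, Equiv.apply_symm_apply]
      rw [this, unsplit_f]
    · have : v = g i := by
        rw [← eP_inl_inr hmatch i, ← hv, Equiv.apply_symm_apply]
      rw [this, unsplit_g]
    · have : v = w.val := by
        rw [← eP_inr hmatch w, ← hv, Equiv.apply_symm_apply]
      rw [this, unsplit_c]
  right_inv := by
    rintro ⟨⟨r, u⟩, h1⟩
    apply Subtype.ext
    refine Prod.ext (funext fun i => ?_) (funext fun w => ?_)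
    · show (unsplit hmatch _ (f i), unsplit hmatch _ (g i)) = r i
      rw [unsplit_f, unsplit_g]
    · show unsplit hmatch _ w.val = u w
      rw [unsplit_c]

end

end Stmt4

theorem stmt4 (N M : ℕ) (hN : 2 ≤ N) (f g : Fin M → Fin N)
    (hmatch : Function.Injective (Sum.elim f g : Fin M ⊕ Fin M → Fin N)) :
    Set.ncard {c : Fin N ⊕ Fin M → ℕ | DraconianD (MatchTri N M f g) c} =
      3 ^ M * Nat.choose (2 * (N - 1)) (N - 1) := by
  classical
  have hset : {c : Fin N ⊕ Fin M → ℕ | DraconianD (MatchTri N M f g) c} =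
      {c : Fin N ⊕ Fin M → ℕ | (∑ v, c v) = N + M - 1 ∧ (∀ i, c (Sum.inr i) ≤ 2) ∧
        ∀ i, 1 ≤ c (Sum.inl (f i)) + c (Sum.inl (g i)) + c (Sum.inr i)} :=
    Set.ext fun c => Stmt4.char hN hmatch c
  rw [hset, ← Nat.card_coe_set_eq]
  rw [Set.coe_setOf]
  have e := (Stmt4.equiv1 hmatch).trans (Stmt4.equiv2 (f := f) (g := g) (by omega))
  rw [Nat.card_congr e, Nat.card_prod, Nat.card_congr (Stmt4.equiv3 hmatch).symm]
  have h1 : Nat.card (Fin M → Fin 3) = 3 ^ M := by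
    simp [Nat.card_eq_fintype_card]
  have h2 : Nat.card {b : Fin N → ℕ // ∑ v, b v = N - 1} =
      Nat.choose (2 * (N - 1)) (N - 1) := by
    rw [← Nat.card_congr (Sym.equivNatSumOfFintype (Fin N) (N - 1))]
    rw [Nat.card_eq_fintype_card, Sym.card_sym_eq_choose]
    congr 1
    rw [Fintype.card_fin]
    omega
  rw [h1, h2]
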